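/- arXiv:1402.3194 — 2 statements merged into one kernel-verified Lean document; each statement's English description precedes it below -/
import Mathlib

section
/- For all u ∈ ℝ⁶ and u₀ ∈ ℝ, the matrix S_x(u) is symmetric and the product S_x(u)·A_x(u) is symmetric, where S_x is the perturbed Hessian symmetrizer of the two-layer shallow water model. -/
open Matrix

noncomputable def Ax (g γ : ℝ) (u : Fin 6 → ℝ) : Matrix (Fin 6) (Fin 6) ℝ :=
  !![u 2, 0, u 0, 0, 0, 0;
     0, u 3, 0, u 1, 0, 0;
     g, g, u 2, 0, 0, 0;
     γ * g, g, 0, u 3, 0, 0;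
     0, 0, 0, 0, u 2, 0;
     0, 0, 0, 0, 0, u 3]

noncomputable def Sx (g γ u₀ : ℝ) (u : Fin 6 → ℝ) : Matrix (Fin 6) (Fin 6) ℝ :=
  !![g * γ, g * γ, γ * (u 2 - u₀), 0, 0, 0;
     g * γ, g, 0, u 3 - u₀, 0, 0;
     γ * (u 2 - u₀), 0, γ * u 0, 0, 0, 0;
     0, u 3 - u₀, 0, u 1, 0, 0;
     0, 0, 0, 0, γ * u 0, 0;
     0, 0, 0, 0, 0, u 1]

@[simp]
lemma cons_val_five' {m : ℕ} {α : Type*} (x : α) (u : Fin (m + 5) → α) :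
    Matrix.vecCons x u 5 =
      Matrix.vecHead (Matrix.vecTail (Matrix.vecTail (Matrix.vecTail (Matrix.vecTail u)))) :=
  rfl

@[simp]
lemma vecTail_const' {n : ℕ} {α : Type*} (a : α) :
    Matrix.vecTail (fun _ : Fin (n + 1) => a) = fun _ => a :=
  rfl

set_option maxHeartbeats 2000000 in
theorem Sx_symmetrizer (g γ : ℝ) :
    ∀ (u : Fin 6 → ℝ) (u₀ : ℝ),
      (Sx g γ u₀ u).IsSymm ∧ (Sx g γ u₀ u * Ax g γ u).IsSymm := by
  intro u u₀
  constructor <;>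
  · rw [Matrix.IsSymm]
    ext i j
    fin_cases i <;> fin_cases j <;>
      simp [Sx, Ax, Matrix.mul_apply, Fin.sum_univ_six, Matrix.cons_val_succ,
        Matrix.head_fin_const] <;> ring
end

section
/- The third leading principal minor of the Sturm–Sylvester matrix of the quartic P(λ) = (λ²−1)((λ−F_x)²−h) − γh equals m₃ = 8(1+h)F_x⁴ − 16(1 − h(6+γ) + h²)F_x² + 8(1+h)(1 − 2h(1−2γ) + h²). -/
open Matrix

noncomputable def Mmat (Fx h γ : ℝ) : Matrix (Fin 4) (Fin 4) ℝ :=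
  !![4, -6 * Fx, -2 * (1 + h - Fx^2), 2 * Fx;
     -6 * Fx, 2 * (1 + h + 5 * Fx^2), -2 * Fx * (1 - 2*h + 2*Fx^2), 4 * h * (γ - 1);
     -2 * (1 + h - Fx^2), -2 * Fx * (1 - 2*h + 2*Fx^2),
       2 * (1 + h^2 + 4*Fx^2 + Fx^4 + 2*h*(γ - Fx^2)), -2 * Fx * (1 + h*(3*γ - 2) + 2*Fx^2);
     2 * Fx, 4 * h * (γ - 1), -2 * Fx * (1 + h*(3*γ - 2) + 2*Fx^2),
       Fx^4 + Fx^2 + h*(1 - 2*Fx^2 + γ*(Fx^2 - 1)) + 2*(h^2*(1 - γ))]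

theorem m3_formula (Fx h γ : ℝ) (hh : 0 < h) :
    ((Mmat Fx h γ).submatrix (Fin.castLE (by norm_num : 3 ≤ 4))
        (Fin.castLE (by norm_num : 3 ≤ 4))).det =
      8 * (1 + h) * Fx^4 - 16 * (1 - h * (6 + γ) + h^2) * Fx^2 +
        8 * (1 + h) * (1 - 2 * h * (1 - 2 * γ) + h^2) := by
  simp only [Matrix.det_fin_three, Mmat, Matrix.submatrix_apply, Fin.isValue]
  norm_num [Matrix.cons_val_zero, Matrix.cons_val_one, Fin.castLE]
  ring
end
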